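/- (Lemma 3) Let F be a field, m,t,r positive integers, H ∈ F^{r×mt} an encoder matrix with blocks H_1,…,H_m ∈ F^{r×t}. Let L ⊆ {1,…,m} with rank H_L = |L|·t, let l ∈ L, and let j ∈ {1,…,m}\L with rank H_j = t and rank H_{{j}∪L} = |L|·t. Suppose that for every i ∈ L\{l}: rank H_{{i}∪({j}∪(L\{i}))} = rank H_{{j}∪(L\{i})} + t (the decoding condition of user i when {j}∪(L\{i}) is contained in its interfering set). Then there exists an invertible matrix M ∈ F^{t×t} such that H_j = H_l M. -/

import Mathlib

open Matrix

/-- The rank of the `r × |L|t` matrix formed by horizontally concatenating the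
blocks `H l`, `l ∈ L`, of the block encoder matrix `H = [H_1 | ⋯ | H_m]`. -/
noncomputable def blockRank {F : Type} [Field F] {m r t : ℕ}
    (H : Fin m → Matrix (Fin r) (Fin t) F) (L : Finset (Fin m)) : ℕ :=
  Matrix.rank (Matrix.of fun (k : Fin r) (p : {l // l ∈ L} × Fin t) => H p.1.1 k p.2)

theorem stmt4 {F : Type} [Field F] (m t r : ℕ) (hm : 0 < m) (ht : 0 < t) (hr : 0 < r)
    (H : Fin m → Matrix (Fin r) (Fin t) F)
    (L : Finset (Fin m)) (hrankL : blockRank H L = L.card * t)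
    (l : Fin m) (hl : l ∈ L) (j : Fin m) (hj : j ∉ L)
    (hrankj : (H j).rank = t) (hrankjL : blockRank H (insert j L) = L.card * t)
    (hdec : ∀ i ∈ L.erase l,
      blockRank H (insert i (insert j (L.erase i)))
        = blockRank H (insert j (L.erase i)) + t) :
    ∃ M : Matrix (Fin t) (Fin t) F, IsUnit M ∧ H j = H l * M := by
  classical
  set V : Fin m → Submodule F (Fin r → F) := fun i => LinearMap.range (H i).mulVecLin with hV
  set W : Finset (Fin m) → Submodule F (Fin r → F) := fun S => S.sup V with hWdef
  -- Step 1: blockRank = finrank of the sup of column spaces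
  have hbr : ∀ S : Finset (Fin m), blockRank H S = Module.finrank F (W S) := by
    intro S
    have hrange : LinearMap.range (Matrix.of fun (k : Fin r)
        (p : {l // l ∈ S} × Fin t) => H p.1.1 k p.2).mulVecLin = W S := by
      apply le_antisymm
      · rintro y ⟨x, rfl⟩
        have hx : (Matrix.of fun (k : Fin r) (p : {l // l ∈ S} × Fin t) =>
            H p.1.1 k p.2).mulVecLin x
            = ∑ i : {l // l ∈ S}, (H i.1).mulVec (fun c => x (i, c)) := by
          funext k
          simp [Matrix.mulVecLin_apply, Matrix.mulVec, dotProduct,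
            Fintype.sum_prod_type, Finset.sum_apply]
        rw [hx]
        refine Submodule.sum_mem _ fun i _ => ?_
        exact Finset.le_sup (f := V) i.2 ⟨_, rfl⟩
      · refine Finset.sup_le fun i hi => ?_
        rintro y ⟨u, rfl⟩
        refine ⟨fun p => if p.1 = ⟨i, hi⟩ then u p.2 else 0, ?_⟩
        funext k
        show ∑ p : {l // l ∈ S} × Fin t,
            H p.1.1 k p.2 * (if p.1 = ⟨i, hi⟩ then u p.2 else 0) = (H i).mulVec u k
        rw [Fintype.sum_prod_type]
        simp [mul_ite, Finset.sum_ite_eq', Matrix.mulVec, dotProduct]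
    show Module.finrank F _ = _
    rw [hrange]
  -- basic finrank facts
  have hsup_le : ∀ s u : Submodule F (Fin r → F),
      Module.finrank F ↥(s ⊔ u) ≤ Module.finrank F s + Module.finrank F u := by
    intro s u
    have := Submodule.finrank_sup_add_finrank_inf_eq s u
    omega
  have hVle : ∀ i, Module.finrank F (V i) ≤ t := by
    intro i
    exact (by simpa using (H i).rank_le_card_width : (H i).rank ≤ t)
  have hWle : ∀ S : Finset (Fin m), Module.finrank F (W S) ≤ S.card * t := by
    intro S
    induction S using Finset.induction_on with
    | empty => simp [hWdef]
    | @insert a S haS ih =>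
      have : W (insert a S) = V a ⊔ W S := Finset.sup_insert
      rw [this, Finset.card_insert_of_notMem haS, add_mul, one_mul]
      calc Module.finrank F ↥(V a ⊔ W S) ≤ _ + _ := hsup_le _ _
        _ ≤ t + S.card * t := add_le_add (hVle a) ih
        _ = S.card * t + t := add_comm _ _
  have hWL : Module.finrank F (W L) = L.card * t := by rw [← hbr]; exact hrankL
  have hWcard : ∀ S : Finset (Fin m), S ⊆ L →
      Module.finrank F (W S) = S.card * t := by
    intro S hS
    have hunion : S ∪ L \ S = L := Finset.union_sdiff_of_subset hS
    have h1 : W L = W S ⊔ W (L \ S) := by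
      rw [hWdef]; rw [← Finset.sup_union, hunion]
    have h2 : Module.finrank F (W L) ≤
        Module.finrank F (W S) + Module.finrank F (W (L \ S)) := by
      rw [h1]; exact hsup_le _ _
    have h3 := hWle (L \ S)
    have h4 := hWle S
    have h5 : (L \ S).card = L.card - S.card := Finset.card_sdiff_of_subset hS
    have h6 : S.card ≤ L.card := Finset.card_le_card hS
    have h7 : (L.card - S.card) * t = L.card * t - S.card * t := Nat.sub_mul _ _ _
    have h8 : S.card * t ≤ L.card * t := Nat.mul_le_mul_right _ h6
    rw [h5] at h3
    omega
  -- V j ≤ W L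
  have hWjL : W (insert j L) = W L := by
    have hle : W L ≤ W (insert j L) := Finset.sup_mono (Finset.subset_insert _ _)
    refine (Submodule.eq_of_le_of_finrank_eq hle ?_).symm
    rw [hWL, ← hbr, hrankjL]
  have hVjL : V j ≤ W L := by
    rw [← hWjL]
    exact Finset.le_sup (Finset.mem_insert_self j L)
  -- V j ≤ W (L.erase i) for i ∈ L.erase l
  have hcardL : 1 ≤ L.card := Finset.card_pos.mpr ⟨l, hl⟩
  have hVj_erase : ∀ i ∈ L.erase l, V j ≤ W (L.erase i) := by
    intro i hi
    have hiL : i ∈ L := Finset.mem_of_mem_erase hi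
    have hset : insert i (insert j (L.erase i)) = insert j L := by
      ext k
      simp only [Finset.mem_insert, Finset.mem_erase]
      constructor
      · rintro (rfl | rfl | ⟨-, hk⟩)
        · exact Or.inr hiL
        · exact Or.inl rfl
        · exact Or.inr hk
      · rintro (rfl | hk)
        · exact Or.inr (Or.inl rfl)
        · by_cases hki : k = i
          · exact Or.inl hki
          · exact Or.inr (Or.inr ⟨hki, hk⟩)
    have hd := hdec i hi
    rw [hset, hrankjL] at hd
    have h1 : Module.finrank F (W (insert j (L.erase i))) = L.card * t - t := by
      rw [← hbr]; omega
    have h2 : Module.finrank F (W (L.erase i)) = (L.card - 1) * t := by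
      rw [hWcard _ (Finset.erase_subset _ _), Finset.card_erase_of_mem hiL]
    have h3 : (L.card - 1) * t = L.card * t - t := by
      rw [Nat.sub_mul, one_mul]
    have hle : W (L.erase i) ≤ W (insert j (L.erase i)) :=
      Finset.sup_mono (Finset.subset_insert _ _)
    have heq : W (L.erase i) = W (insert j (L.erase i)) :=
      Submodule.eq_of_le_of_finrank_eq hle (by rw [h1, h2, h3])
    rw [heq]
    exact Finset.le_sup (Finset.mem_insert_self _ _)
  -- intersection lemma
  have hinter : ∀ A B : Finset (Fin m), A ⊆ L → B ⊆ L → W A ⊓ W B = W (A ∩ B) := by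
    intro A B hA hB
    have hle : W (A ∩ B) ≤ W A ⊓ W B :=
      le_inf (Finset.sup_mono Finset.inter_subset_left)
        (Finset.sup_mono Finset.inter_subset_right)
    refine (Submodule.eq_of_le_of_finrank_eq hle ?_).symm
    have h1 := Submodule.finrank_sup_add_finrank_inf_eq (W A) (W B)
    have h2 : W A ⊔ W B = W (A ∪ B) := (Finset.sup_union).symm
    rw [h2, hWcard _ hA, hWcard _ hB,
      hWcard _ (Finset.union_subset hA hB)] at h1
    rw [hWcard _ ((Finset.inter_subset_left).trans hA)]
    have h3 := Finset.card_union_add_card_inter A B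
    have h4 : ((A ∪ B).card + (A ∩ B).card) * t = (A.card + B.card) * t := by rw [h3]
    rw [add_mul, add_mul] at h4
    omega
  -- induction: V j ≤ W (L \ T) for T ⊆ L.erase l
  have key : ∀ T : Finset (Fin m), T ⊆ L.erase l → V j ≤ W (L \ T) := by
    intro T
    induction T using Finset.induction_on with
    | empty => intro _; simpa using hVjL
    | @insert a T haT ih =>
      intro hT
      have haL : a ∈ L.erase l := hT (Finset.mem_insert_self a T)
      have hT' : T ⊆ L.erase l := (Finset.subset_insert a T).trans hT
      have h3 : V j ≤ W (L \ T) ⊓ W (L.erase a) := le_inf (ih hT') (hVj_erase a haL)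
      rw [hinter _ _ (Finset.sdiff_subset) (Finset.erase_subset _ _)] at h3
      have hset : (L \ T) ∩ L.erase a = L \ insert a T := by
        ext k
        simp only [Finset.mem_inter, Finset.mem_sdiff, Finset.mem_erase, Finset.mem_insert]
        tauto
      rwa [hset] at h3
  have hjl : V j ≤ V l := by
    have h := key (L.erase l) le_rfl
    have hset : L \ L.erase l = {l} := by
      ext k
      simp only [Finset.mem_sdiff, Finset.mem_erase, Finset.mem_singleton]
      constructor
      · rintro ⟨hk, h2⟩
        by_contra hkl
        exact h2 ⟨hkl, hk⟩
      · rintro rfl; exact ⟨hl, fun h => h.1 rfl⟩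
    rw [hset] at h
    simpa [hWdef] using h
  -- construct M
  have hcol : ∀ c : Fin t, ∃ u : Fin t → F, (H l).mulVec u = fun k => H j k c := by
    intro c
    have hmem : (fun k => H j k c) ∈ V j := by
      refine ⟨Pi.single c 1, ?_⟩
      simp [Matrix.mulVecLin_apply]; rfl
    exact hjl hmem
  choose u hu using hcol
  refine ⟨Matrix.of fun b c => u c b, ?_, ?_⟩
  case refine_2 =>
    ext a c
    rw [Matrix.mul_apply]
    have := congrFun (hu c) a
    simpa [Matrix.mulVec, dotProduct] using this.symm
  case refine_1 =>
    -- injectivity of (H j).mulVecLin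
    have hinj : Function.Injective (H j).mulVecLin := by
      rw [← LinearMap.ker_eq_bot]
      have h1 := LinearMap.finrank_range_add_finrank_ker (H j).mulVecLin
      have h2 : Module.finrank F (LinearMap.range (H j).mulVecLin) = t := hrankj
      have h3 : Module.finrank F (Fin t → F) = t := by simp
      have h4 : Module.finrank F (LinearMap.ker (H j).mulVecLin) = 0 := by omega
      exact Submodule.finrank_eq_zero.mp h4
    have hHj : H j = H l * Matrix.of fun b c => u c b := by
      ext a c
      rw [Matrix.mul_apply]
      have := congrFun (hu c) a
      simpa [Matrix.mulVec, dotProduct] using this.symm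
    rw [← Matrix.mulVec_injective_iff_isUnit]
    intro x y hxy
    apply hinj
    show (H j).mulVecLin x = (H j).mulVecLin y
    rw [hHj]
    simp only [Matrix.mulVecLin_mul, LinearMap.comp_apply, Matrix.mulVecLin_apply, hxy]
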